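/- With the notation of the resolvent expansion in A_n^m, for every s = m+1,...,n the coefficient A_s of the resolvent (t e_1 − ζ)^{-1} = Σ A_r I_r can be written as A_s = Σ_{k=2}^{s−m+1} Q_{k,s}/(t − ξ_{u_s})^k, where Q_{2,s} = T_s and Q_{k,s} = Σ_{r=m+1}^{s−1} Q_{k−1,r} B_{r,s} for k = 3,...,s−m+1. -/

import Mathlib

/-- Lemma 3: every resolvent coefficient `A_s` (for a nilpotent index `s`) can
be written as `A_s = Σ_{k=2}^{s−m+1} Q_{k,s}/(t − ξ_{u_s})^k`, where the `Q_{k,s}`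
are given by the recurrence `Q_{2,s} = T_s`, `Q_{k,s} = Σ_r Q_{k−1,r} B_{r,s}`.
(With 0-based indices `s.val ∈ {m,…,n−1}`, the upper limit `s − m + 1` of the
paper becomes `s.val − m + 2`.) -/
theorem lemma_three (n m : ℕ) (hm : m ≤ n) (A : Type*)
    [CommRing A] [Algebra ℂ A]
    (I : Module.Basis (Fin n) ℂ A)
    (hidem : ∀ r s : Fin n, r.val < m → s.val < m →
      I r * I s = if r = s then I r else 0)
    (Υ : Fin n → Fin n → Fin n → ℂ)
    (hnil : ∀ r s : Fin n, m ≤ r.val → m ≤ s.val →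
      I r * I s = ∑ k ∈ Finset.univ.filter (fun k : Fin n => max r.val s.val < k.val),
        Υ r s k • I k)
    (u : Fin n → Fin n)
    (hu : ∀ s : Fin n, m ≤ s.val → (u s).val < m)
    (hmul3 : ∀ s : Fin n, m ≤ s.val → ∀ r : Fin n, r.val < m →
      I r * I s = if r = u s then I s else 0)
    (hone : ∑ w ∈ Finset.univ.filter (fun w : Fin n => w.val < m), I w = 1)
    (a b : Fin n → ℂ) (x y z : ℝ)
    (ξ : Fin n → ℂ) (hξ : ∀ w, ξ w = (x : ℂ) + (y : ℂ) * a w + (z : ℂ) * b w)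
    (T : Fin n → ℂ) (hT : ∀ p, T p = (y : ℂ) * a p + (z : ℂ) * b p)
    (B : Fin n → Fin n → ℂ)
    (hB : ∀ r p : Fin n, B r p =
      ∑ s ∈ Finset.univ.filter (fun s : Fin n => m ≤ s.val ∧ s < p), T s * Υ r s p)
    (t : ℂ) (ht : ∀ w : Fin n, w.val < m → t ≠ ξ w)
    (Ac : Fin n → ℂ)
    (hAc1 : ∀ w : Fin n, w.val < m → Ac w = 1 / (t - ξ w))
    (hAc2 : ∀ p : Fin n, m ≤ p.val →
      Ac p = T p / (t - ξ (u p)) ^ 2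
        + (1 / (t - ξ (u p)))
            * ∑ r ∈ Finset.univ.filter (fun r : Fin n => m ≤ r.val ∧ r < p),
                Ac r * B r p)
    -- the recurrence defining `Q_{k,s}`
    (Q : ℕ → Fin n → ℂ)
    (hQ2 : ∀ s : Fin n, Q 2 s = T s)
    (hQrec : ∀ k : ℕ, 3 ≤ k → ∀ s : Fin n,
      Q k s = ∑ r ∈ Finset.univ.filter (fun r : Fin n => m ≤ r.val ∧ r < s),
        Q (k - 1) r * B r s) :
    ∀ s : Fin n, m ≤ s.val →
      Ac s = ∑ k ∈ Finset.Icc 2 (s.val - m + 2), Q k s / (t - ξ (u s)) ^ k := by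
  -- Key algebraic fact: nonzero structure constants link the idempotent labels.
  have key : ∀ r s k : Fin n, m ≤ r.val → m ≤ s.val → max r.val s.val < k.val →
      Υ r s k ≠ 0 → u k = u r := by
    intro r s k hr hs hk hne
    have hur : I (u r) * I r = I r := by
      rw [hmul3 r hr (u r) (hu r hr)]; simp
    have h1 : I (u r) * (I r * I s) = I r * I s := by
      rw [← mul_assoc, hur]
    have h2 : I (u r) * (I r * I s)
        = ∑ w ∈ Finset.univ.filter (fun w : Fin n => max r.val s.val < w.val),
            (if u r = u w then Υ r s w else 0) • I w := by
      rw [hnil r s hr hs, Finset.mul_sum]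
      refine Finset.sum_congr rfl ?_
      intro w hw
      simp only [Finset.mem_filter, Finset.mem_univ, true_and] at hw
      have hwm : m ≤ w.val := le_trans (le_trans hr (le_max_left _ _)) (le_of_lt hw)
      rw [mul_smul_comm, hmul3 w hwm (u r) (hu r hr)]
      split_ifs with h
      · rfl
      · simp
    have heq : (∑ w ∈ Finset.univ.filter (fun w : Fin n => max r.val s.val < w.val),
          (if u r = u w then Υ r s w else 0) • I w)
        = ∑ w ∈ Finset.univ.filter (fun w : Fin n => max r.val s.val < w.val),
            Υ r s w • I w := by
      rw [← h2, h1, hnil r s hr hs]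
    have hco := congrArg (fun v => (I.repr v) k) heq
    simp only [map_sum, map_smul, Module.Basis.repr_self, Finsupp.smul_single, smul_eq_mul,
      mul_one, Finsupp.finset_sum_apply, Finsupp.single_apply] at hco
    rw [Finset.sum_ite_eq' _ k, Finset.sum_ite_eq' _ k] at hco
    simp only [Finset.mem_filter, Finset.mem_univ, true_and, hk, if_true] at hco
    by_contra hc
    rw [if_neg (fun h => hc h.symm)] at hco
    exact hne hco.symm
  -- If B r p ≠ 0 (with r, p nilpotent, r < p) then u p = u r.
  have keyB : ∀ r p : Fin n, m ≤ r.val → m ≤ p.val → r < p → B r p ≠ 0 → u p = u r := by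
    intro r p hr hp hrp hBne
    rw [hB] at hBne
    obtain ⟨s, hs, hsne⟩ := Finset.exists_ne_zero_of_sum_ne_zero hBne
    simp only [Finset.mem_filter, Finset.mem_univ, true_and] at hs
    have hΥ : Υ r s p ≠ 0 := fun h => hsne (by rw [h, mul_zero])
    have h1 : r.val < p.val := hrp
    have h2 : s.val < p.val := hs.2
    exact key r s p hr hs.1 (sup_lt_iff.mpr ⟨h1, h2⟩) hΥ
  -- Vanishing of Q above the diagonal.
  have Qzero : ∀ j : ℕ, 3 ≤ j → ∀ r : Fin n, r.val - m + 2 < j → Q j r = 0 := by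
    intro j hj
    induction j, hj using Nat.le_induction with
    | base =>
      intro r hr
      rw [hQrec 3 le_rfl r]
      refine Finset.sum_eq_zero ?_
      intro w hw
      simp only [Finset.mem_filter, Finset.mem_univ, true_and, Fin.lt_def] at hw
      omega
    | succ j hj ih =>
      intro r hr
      rw [hQrec (j + 1) (by omega) r]
      refine Finset.sum_eq_zero ?_
      intro w hw
      simp only [Finset.mem_filter, Finset.mem_univ, true_and, Fin.lt_def] at hw
      have : Q ((j + 1) - 1) w = 0 := by
        simp only [Nat.add_sub_cancel]
        exact ih w (by omega)
      rw [this, zero_mul]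
  -- Main claim by strong induction on s.val.
  suffices H : ∀ N : ℕ, ∀ s : Fin n, s.val < N → m ≤ s.val →
      Ac s = ∑ k ∈ Finset.Icc 2 (s.val - m + 2), Q k s / (t - ξ (u s)) ^ k by
    intro s hs; exact H n s s.isLt hs
  intro N
  induction N with
  | zero => intro s hs; omega
  | succ N ih =>
    intro p hpN hpm
    set d : ℂ := t - ξ (u p) with hd
    set F : Finset (Fin n) := Finset.univ.filter (fun r : Fin n => m ≤ r.val ∧ r < p) with hF
    -- Step A: rewrite each Ac r in the sum.
    have stepA : ∑ r ∈ F, Ac r * B r p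
        = ∑ r ∈ F, (∑ k ∈ Finset.Icc 2 (p.val - m + 1), Q k r / d ^ k) * B r p := by
      refine Finset.sum_congr rfl ?_
      intro r hr
      simp only [hF, Finset.mem_filter, Finset.mem_univ, true_and] at hr
      by_cases hBz : B r p = 0
      · rw [hBz, mul_zero, mul_zero]
      · have hur : u p = u r := keyB r p hr.1 hpm hr.2 hBz
        have hrlt : r.val < N := by
          have := hr.2; rw [Fin.lt_def] at this; omega
        have hAr : Ac r = ∑ k ∈ Finset.Icc 2 (r.val - m + 2), Q k r / d ^ k := by
          rw [ih r hrlt hr.1, hd, hur]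
        rw [hAr]
        congr 1
        refine Finset.sum_subset ?_ ?_
        · intro k hk
          simp only [Finset.mem_Icc] at hk ⊢
          have h2 : r.val < p.val := hr.2
          omega
        · intro k hk hk2
          simp only [Finset.mem_Icc] at hk hk2
          have hQz : Q k r = 0 := Qzero k (by omega) r (by omega)
          rw [hQz, zero_div]
    -- Step B: exchange sums and use the recurrence for Q.
    have stepB : (1 / d) * ∑ r ∈ F, (∑ k ∈ Finset.Icc 2 (p.val - m + 1), Q k r / d ^ k) * B r p
        = ∑ k ∈ Finset.Icc 2 (p.val - m + 1), Q (k + 1) p / d ^ (k + 1) := by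
      rw [Finset.mul_sum]
      have : ∀ r ∈ F, (1 / d) * ((∑ k ∈ Finset.Icc 2 (p.val - m + 1), Q k r / d ^ k) * B r p)
          = ∑ k ∈ Finset.Icc 2 (p.val - m + 1), Q k r * B r p / d ^ (k + 1) := by
        intro r _
        rw [Finset.sum_mul, Finset.mul_sum]
        refine Finset.sum_congr rfl ?_
        intro k _
        rw [pow_succ, ← div_div, div_mul_eq_mul_div, one_mul, div_mul_eq_mul_div]
      rw [Finset.sum_congr rfl this, Finset.sum_comm]
      refine Finset.sum_congr rfl ?_
      intro k hk
      simp only [Finset.mem_Icc] at hk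
      rw [← Finset.sum_div]
      congr 1
      rw [hQrec (k + 1) (by omega) p]
      simp only [Nat.add_sub_cancel, hF]
    -- Assemble.
    rw [hAc2 p hpm, ← hd, stepA, stepB]
    have reidx : ∑ k ∈ Finset.Icc 2 (p.val - m + 1), Q (k + 1) p / d ^ (k + 1)
        = ∑ k ∈ Finset.Icc 3 (p.val - m + 2), Q k p / d ^ k := by
      rw [show p.val - m + 2 = (p.val - m + 1) + 1 by omega,
        ← Finset.map_add_right_Icc 2 (p.val - m + 1) 1, Finset.sum_map]
      rfl
    rw [reidx]
    have hsplit : Finset.Icc 2 (p.val - m + 2) = insert 2 (Finset.Icc 3 (p.val - m + 2)) := by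
      ext k
      simp only [Finset.mem_Icc, Finset.mem_insert]
      omega
    rw [hsplit, Finset.sum_insert (by simp), hQ2]
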